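/- Let F be a field and for α ∈ F let A_{3,4}^α be the 3-dimensional non-unital associative F-algebra with basis a, b, c and nonzero products a² = αc, ab = c, b² = c. Then for α, β ∈ F, the algebras A_{3,4}^α and A_{3,4}^β are isomorphic if and only if α = β. -/

import Mathlib

/-- The multiplication table of `A_{3,4}^α` on a basis `a = v 0`, `b = v 1`, `c = v 2`:
`a² = αc`, `ab = c`, `b² = c`, and all other products of basis elements zero
(in particular `ba = 0`). -/
def IsA34Basis {F A : Type*} [Field F] [NonUnitalRing A] [Module F A]
    (α : F) (v : Module.Basis (Fin 3) F A) : Prop :=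
  v 0 * v 0 = α • v 2 ∧ v 0 * v 1 = v 2 ∧ v 1 * v 1 = v 2 ∧
  v 1 * v 0 = 0 ∧ v 0 * v 2 = 0 ∧ v 2 * v 0 = 0 ∧
  v 1 * v 2 = 0 ∧ v 2 * v 1 = 0 ∧ v 2 * v 2 = 0

/-- The general multiplication formula in an algebra with an `A_{3,4}^β` basis. -/
lemma keymul {F B : Type*} [Field F] [NonUnitalRing B] [Module F B]
    [SMulCommClass F B B] [IsScalarTower F B B]
    {β : F} {w : Module.Basis (Fin 3) F B} (hw : IsA34Basis β w)
    (p q s r t u : F) :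
    (p • w 0 + q • w 1 + s • w 2) * (r • w 0 + t • w 1 + u • w 2)
      = (β * (p * r) + p * t + q * t) • w 2 := by
  obtain ⟨h1, h2, h3, h4, h5, h6, h7, h8, h9⟩ := hw
  simp only [add_mul, mul_add, smul_mul_assoc, mul_smul_comm, h1, h2, h3, h4, h5, h6, h7,
    h8, h9, smul_zero, add_zero, zero_add, smul_smul]
  module

/-- Expansion of a vector in a basis indexed by `Fin 3`. -/
lemma repr_expand {F B : Type*} [Field F] [AddCommGroup B] [Module F B]
    (w : Module.Basis (Fin 3) F B) (x : B) :
    x = w.repr x 0 • w 0 + w.repr x 1 • w 1 + w.repr x 2 • w 2 := by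
  have := w.sum_repr x
  rw [Fin.sum_univ_three] at this
  exact this.symm

/-- For `α, β ∈ F`, the algebras `A_{3,4}^α` and `A_{3,4}^β` are isomorphic
if and only if `α = β`. -/
theorem stmt10 {F A B : Type*} [Field F]
    [NonUnitalRing A] [Module F A] [SMulCommClass F A A] [IsScalarTower F A A]
    [NonUnitalRing B] [Module F B] [SMulCommClass F B B] [IsScalarTower F B B]
    (α β : F)
    (v : Module.Basis (Fin 3) F A) (w : Module.Basis (Fin 3) F B)
    (hv : IsA34Basis α v) (hw : IsA34Basis β w) :
    (∃ e : A ≃ₗ[F] B, ∀ x y : A, e (x * y) = e x * e y) ↔ α = β := by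
  constructor
  · rintro ⟨e, he⟩
    set x := e (v 0) with hxdef
    set y := e (v 1) with hydef
    set p := w.repr x 0 with hp
    set q := w.repr x 1 with hq
    set s := w.repr x 2 with hs
    set r := w.repr y 0 with hr
    set t := w.repr y 1 with ht
    set u := w.repr y 2 with hu
    have hx : x = p • w 0 + q • w 1 + s • w 2 := repr_expand w x
    have hy : y = r • w 0 + t • w 1 + u • w 2 := repr_expand w y
    set L : F := β * (p * r) + p * t + q * t with hL
    -- e (v 2) = L • w 2
    have hz : e (v 2) = L • w 2 := by
      rw [← hv.2.1, he, ← hxdef, ← hydef, hx, hy, keymul hw]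
    have hLne : L ≠ 0 := by
      intro h
      have : e (v 2) = 0 := by rw [hz, h, zero_smul]
      exact w.ne_zero 2 (by
        have := e.injective (this.trans (map_zero e).symm)
        exact absurd this (v.ne_zero 2)) |>.elim
    -- equation from a² = αc
    have e1 : β * (p * p) + p * q + q * q = α * L := by
      have h := he (v 0) (v 0)
      rw [hv.1, map_smul, hz, ← hxdef, hx, keymul hw, smul_smul] at h
      exact smul_left_injective F (w.ne_zero 2) h.symm
    -- equation from ba = 0
    have e3 : β * (r * p) + r * q + t * q = 0 := by
      have h := he (v 1) (v 0)
      rw [hv.2.2.2.1, map_zero, ← hxdef, ← hydef, hy, hx, keymul hw] at h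
      rcases smul_eq_zero.mp h.symm with h' | h'
      · exact h'
      · exact absurd h' (w.ne_zero 2)
    -- equation from b² = c
    have e4 : β * (r * r) + r * t + t * t = L := by
      have h := he (v 1) (v 1)
      rw [hv.2.2.1, hz, ← hydef, hy, keymul hw] at h
      exact smul_left_injective F (w.ne_zero 2) h.symm
    have key : α * L ^ 2 = β * L ^ 2 := by
      linear_combination (-(β * (r * r) + r * t + t * t)) * e1 +
        (L - 2 * β * L + β * (β * (r * p) + r * q + t * q)) * e3 + (-(α * L)) * e4
    exact mul_right_cancel₀ (pow_ne_zero 2 hLne) key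
  · rintro rfl
    refine ⟨v.equiv w (Equiv.refl _), fun x y => ?_⟩
    have hx := repr_expand v x
    have hy := repr_expand v y
    rw [hx, hy, keymul hv]
    simp only [map_smul, map_add, Module.Basis.equiv_apply, Equiv.refl_apply]
    rw [keymul hw]
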